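/- arXiv:2006.13629 — 3 statements merged into one kernel-verified Lean document; each statement's English description precedes it below -/
import Mathlib

section
/- Let p_S, p_T be joint distributions of (Z, Y) with Y in the probability simplex of ℝ^C, let w : Z → ℝ₊ satisfy w(z) p_S(z) = p_T(z) (as marginals on Z). Let f_S(z) = E_S[Y|Z=z] and f_T(z) = E_T[Y|Z=z], both in a symmetric convex class F_C with (f_S−f_T)/2 ∈ F_C. If TSF(w) := sup_{f∈F_C} ( E_T[Y·f(Z)] − E_S[w(Z) Y·f(Z)] ) = 0, then f_S = f_T holds p_T-almost surely, i.e. E_T[Y|Z=z] = E_S[Y|Z=z] for p_T-almost every z. -/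
open MeasureTheory

lemma abs_sum_mul_le' {C : ℕ} (a b : Fin C → ℝ) {M N : ℝ}
    (ha : ∀ c, |a c| ≤ M) (hb : ∀ c, |b c| ≤ N) :
    |∑ c, a c * b c| ≤ C * (M * N) := by
  calc |∑ c, a c * b c| ≤ ∑ c, |a c * b c| := Finset.abs_sum_le_sum_abs _ _
    _ ≤ ∑ _c : Fin C, M * N := by
        refine Finset.sum_le_sum fun c _ => ?_
        rw [abs_mul]
        exact mul_le_mul (ha c) (hb c) (abs_nonneg _) ((abs_nonneg _).trans (ha c))
    _ = C * (M * N) := by simp [Finset.sum_const, Finset.card_univ]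

lemma integrable_bdd' {α : Type*} [MeasurableSpace α] (μ : Measure α)
    [IsFiniteMeasure μ] {g : α → ℝ} (hm : Measurable g) {M : ℝ}
    (hb : ∀ a, |g a| ≤ M) : Integrable g μ :=
  (integrable_const M).mono' hm.aestronglyMeasurable
    (Filter.Eventually.of_forall fun a => by simpa using hb a)

lemma meas_sum_mul {Z : Type*} [MeasurableSpace Z] {C : ℕ}
    {a f : Z → Fin C → ℝ} (ha : Measurable a) (hf : Measurable f) :
    Measurable (fun z => ∑ c, a z c * f z c) :=
  Finset.measurable_sum _ fun c _ =>
    ((measurable_pi_apply c).comp ha).mul ((measurable_pi_apply c).comp hf)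

/-- Nullity of the weighted transferability error implies conservation of the
labelling function across domains (p_T-almost surely). -/
theorem stmt7 {Z : Type*} [MeasurableSpace Z] {C : ℕ}
    (μS μT : Measure (Z × (Fin C → ℝ)))
    [IsProbabilityMeasure μS] [IsProbabilityMeasure μT]
    (w : Z → ℝ) (hwnn : ∀ z, 0 ≤ w z) (hwm : Measurable w)
    (hchange : ∀ h : Z → ℝ, Measurable h → (∃ M, ∀ z, |h z| ≤ M) →
      ∫ p, w p.1 * h p.1 ∂μS = ∫ p, h p.1 ∂μT)
    (FC : Set (Z → Fin C → ℝ))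
    (hsym : ∀ f ∈ FC, (fun z => -f z) ∈ FC)
    (hconv : Convex ℝ FC)
    (hFCmeas : ∀ f ∈ FC, Measurable f)
    (hFCbdd : ∀ f ∈ FC, ∀ z c, |f z c| ≤ 1)
    (fS fT : Z → Fin C → ℝ) (hfSmem : fS ∈ FC) (hfTmem : fT ∈ FC)
    (hhalf : (fun z => (2 : ℝ)⁻¹ • (fS z - fT z)) ∈ FC)
    (htowerS : ∀ f ∈ FC,
      ∫ p, w p.1 * ∑ c, p.2 c * f p.1 c ∂μS =
        ∫ p, w p.1 * ∑ c, fS p.1 c * f p.1 c ∂μS)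
    (htowerT : ∀ f ∈ FC,
      ∫ p, ∑ c, p.2 c * f p.1 c ∂μT = ∫ p, ∑ c, fT p.1 c * f p.1 c ∂μT)
    (hTSF : sSup {x : ℝ | ∃ f ∈ FC,
        x = (∫ p, ∑ c, p.2 c * f p.1 c ∂μT) -
            ∫ p, w p.1 * ∑ c, p.2 c * f p.1 c ∂μS} = 0) :
    ∀ᵐ z ∂(μT.map Prod.fst), fS z = fT z := by
  have hmS := hFCmeas fS hfSmem
  have hmT := hFCmeas fT hfTmem
  have hbS := hFCbdd fS hfSmem
  have hbT := hFCbdd fT hfTmem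
  -- key: value of the functional for each f ∈ FC
  have key : ∀ f ∈ FC,
      (∫ p, ∑ c, p.2 c * f p.1 c ∂μT) -
        (∫ p, w p.1 * ∑ c, p.2 c * f p.1 c ∂μS) =
      ∫ p, ∑ c, (fT p.1 c - fS p.1 c) * f p.1 c ∂μT := by
    intro f hf
    have hmf := hFCmeas f hf
    have hbf := hFCbdd f hf
    have hchg := hchange (fun z => ∑ c, fS z c * f z c)
      (meas_sum_mul hmS hmf)
      ⟨C * (1 * 1), fun z => abs_sum_mul_le' _ _ (hbS z) (hbf z)⟩
    rw [htowerT f hf, htowerS f hf, hchg]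
    have hi1 : Integrable (fun p : Z × (Fin C → ℝ) =>
        ∑ c, fT p.1 c * f p.1 c) μT :=
      integrable_bdd' μT ((meas_sum_mul hmT hmf).comp measurable_fst)
        (M := C * (1 * 1)) (fun p => abs_sum_mul_le' _ _ (hbT p.1) (hbf p.1))
    have hi2 : Integrable (fun p : Z × (Fin C → ℝ) =>
        ∑ c, fS p.1 c * f p.1 c) μT :=
      integrable_bdd' μT ((meas_sum_mul hmS hmf).comp measurable_fst)
        (M := C * (1 * 1)) (fun p => abs_sum_mul_le' _ _ (hbS p.1) (hbf p.1))
    rw [← integral_sub hi1 hi2]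
    congr 1
    funext p
    rw [← Finset.sum_sub_distrib]
    exact Finset.sum_congr rfl fun c _ => by ring
  -- the set is bounded above
  set S : Set ℝ := {x : ℝ | ∃ f ∈ FC,
      x = (∫ p, ∑ c, p.2 c * f p.1 c ∂μT) -
          ∫ p, w p.1 * ∑ c, p.2 c * f p.1 c ∂μS} with hS
  have hbdd : BddAbove S := by
    refine ⟨C * (2 * 1), ?_⟩
    rintro x ⟨f, hf, rfl⟩
    rw [key f hf]
    have hmf := hFCmeas f hf
    have hbf := hFCbdd f hf
    have hbnd : ∀ p : Z × (Fin C → ℝ),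
        |∑ c, (fT p.1 c - fS p.1 c) * f p.1 c| ≤ C * (2 * 1) := fun p =>
      abs_sum_mul_le' (M := 2) (N := 1) _ _
        (fun c => (abs_sub _ _).trans (by linarith [hbT p.1 c, hbS p.1 c]))
        (hbf p.1)
    calc (∫ p, ∑ c, (fT p.1 c - fS p.1 c) * f p.1 c ∂μT)
        ≤ ∫ _p, (C * (2 * 1) : ℝ) ∂μT := by
          refine integral_mono ?_ (integrable_const _) fun p =>
            (abs_le.mp (hbnd p)).2
          exact integrable_bdd' μT
            ((meas_sum_mul ((hmT.sub hmS)) hmf).comp measurable_fst) hbnd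
      _ = C * (2 * 1) := by simp
  -- the special critic
  set g : Z → Fin C → ℝ := fun z => -((2 : ℝ)⁻¹ • (fS z - fT z)) with hg
  have hgmem : g ∈ FC := hsym _ hhalf
  have hx : ((∫ p, ∑ c, p.2 c * g p.1 c ∂μT) -
      ∫ p, w p.1 * ∑ c, p.2 c * g p.1 c ∂μS) ∈ S := ⟨g, hgmem, rfl⟩
  have hle0 : ((∫ p, ∑ c, p.2 c * g p.1 c ∂μT) -
      ∫ p, w p.1 * ∑ c, p.2 c * g p.1 c ∂μS) ≤ 0 :=
    hTSF ▸ le_csSup hbdd hx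
  rw [key g hgmem] at hle0
  have heq : (fun p : Z × (Fin C → ℝ) => ∑ c, (fT p.1 c - fS p.1 c) * g p.1 c)
      = fun p => (2 : ℝ)⁻¹ * ∑ c, (fS p.1 c - fT p.1 c) ^ 2 := by
    funext p
    rw [Finset.mul_sum]
    refine Finset.sum_congr rfl fun c _ => ?_
    simp only [hg, Pi.neg_apply, Pi.smul_apply, Pi.sub_apply, smul_eq_mul]
    ring
  rw [heq] at hle0
  have hint : Integrable (fun p : Z × (Fin C → ℝ) =>
      (2 : ℝ)⁻¹ * ∑ c, (fS p.1 c - fT p.1 c) ^ 2) μT := by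
    refine integrable_bdd' μT ?_ (M := (2:ℝ)⁻¹ * (C * (2 * 2))) (fun p => ?_)
    · exact (measurable_const.mul (Finset.measurable_sum _ fun c _ =>
        (((measurable_pi_apply c).comp hmS).sub
          ((measurable_pi_apply c).comp hmT)).pow_const 2)).comp measurable_fst
    · have hsum : |∑ c, (fS p.1 c - fT p.1 c) ^ 2| ≤ C * (2 * 2) := by
        have := abs_sum_mul_le' (M := 2) (N := 2) (fun c => fS p.1 c - fT p.1 c)
          (fun c => fS p.1 c - fT p.1 c)
          (fun c => (abs_sub _ _).trans (by linarith [hbS p.1 c, hbT p.1 c]))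
          (fun c => (abs_sub _ _).trans (by linarith [hbS p.1 c, hbT p.1 c]))
        simpa [sq] using this
      rw [abs_mul, abs_of_nonneg (by norm_num : (0:ℝ) ≤ (2:ℝ)⁻¹)]
      exact mul_le_mul_of_nonneg_left hsum (by norm_num)
  have hnn : (0 : Z × (Fin C → ℝ) → ℝ) ≤ fun p =>
      (2 : ℝ)⁻¹ * ∑ c, (fS p.1 c - fT p.1 c) ^ 2 :=
    fun p => by positivity
  have hzero : ∫ p, (2 : ℝ)⁻¹ * ∑ c, (fS p.1 c - fT p.1 c) ^ 2 ∂μT = 0 :=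
    le_antisymm hle0 (integral_nonneg fun p => by positivity)
  have hae : (fun p : Z × (Fin C → ℝ) =>
      (2 : ℝ)⁻¹ * ∑ c, (fS p.1 c - fT p.1 c) ^ 2) =ᵐ[μT] 0 :=
    (integral_eq_zero_iff_of_nonneg hnn hint).mp hzero
  -- transfer to the pushforward measure
  have hmeasfun : Measurable (fun z => ∑ c, (fS z c - fT z c) ^ 2) :=
    Finset.measurable_sum _ fun c _ =>
      (((measurable_pi_apply c).comp hmS).sub
        ((measurable_pi_apply c).comp hmT)).pow_const 2
  have haemap : ∀ᵐ z ∂(μT.map Prod.fst), ∑ c, (fS z c - fT z c) ^ 2 = 0 := by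
    refine (ae_map_iff (p := fun z => ∑ c, (fS z c - fT z c) ^ 2 = 0)
      measurable_fst.aemeasurable
      (hmeasfun (measurableSet_singleton (0:ℝ)))).mpr ?_
    filter_upwards [hae] with p hp
    have h2 : ((2:ℝ)⁻¹) ≠ 0 := by norm_num
    have := hp
    simp only [Pi.zero_apply] at this
    exact (mul_eq_zero.mp this).resolve_left h2
  filter_upwards [haemap] with z hz
  funext c
  have hterm : (fS z c - fT z c) ^ 2 = 0 := by
    have hnn' : ∀ i ∈ Finset.univ, (0:ℝ) ≤ (fS z i - fT z i) ^ 2 :=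
      fun i _ => sq_nonneg _
    exact (Finset.sum_eq_zero_iff_of_nonneg hnn').mp hz c (Finset.mem_univ c)
  have := sq_eq_zero_iff.mp hterm
  linarith
end

section
/- MinEnt lower bound: let g be a label-smooth classifier (α/(C−1) ≤ g_c(z) ≤ 1−α for all z, c) and set η = −1/log(α/(C−1)) > 0 and f(z) = −η·log(g(z)) ∈ [0,1]^C. Then for any weight w ≥ 0 with E_S[w(Z)] = 1, the transferability error TSF̂(w, φ, g) = sup_{f'∈F_C}(E_T[g(Z)·f'(Z)] − E_S[w(Z) Y·f'(Z)]) satisfies TSF̂(w,φ,g) ≥ η·( H_T(g) − CE_{w·S}(Y, g) ), where H_T(g) = E_T[−g(Z)·log g(Z)] is the target prediction entropy and CE_{w·S}(Y,g) = E_S[−w(Z) Y·log g(Z)] is the weighted source cross-entropy. -/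
open MeasureTheory

/-- MinEnt lower bound: the entropy regularizer minus the weighted source
cross-entropy, scaled by `η`, lower-bounds the approximated transferability
error over critics valued in `[0,1]^C`. -/
theorem stmt15 {Z : Type*} [MeasurableSpace Z] {C : ℕ}
    (μS : Measure (Z × (Fin C → ℝ))) [IsProbabilityMeasure μS]
    (μZT : Measure Z) [IsProbabilityMeasure μZT]
    (α : ℝ) (hα0 : 0 < α) (hα1 : α < 1) (hsm : α / ((C : ℝ) - 1) < 1)
    (g : Z → Fin C → ℝ) (hgm : Measurable g)
    (hg : ∀ z c, α / ((C : ℝ) - 1) ≤ g z c ∧ g z c ≤ 1 - α)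
    (w : Z → ℝ) (hwnn : ∀ z, 0 ≤ w z) (hwm : Measurable w)
    (hwnorm : ∫ p, w p.1 ∂μS = 1)
    (η : ℝ) (hη : η = -(Real.log (α / ((C : ℝ) - 1)))⁻¹)
    (hbdd : BddAbove {x : ℝ | ∃ f : Z → Fin C → ℝ, Measurable f ∧
        (∀ z c, f z c ∈ Set.Icc (0 : ℝ) 1) ∧
        x = (∫ z, ∑ c, g z c * f z c ∂μZT) -
            ∫ p, w p.1 * ∑ c, p.2 c * f p.1 c ∂μS}) :
    η * ((∫ z, -∑ c, g z c * Real.log (g z c) ∂μZT) -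
          ∫ p, -(w p.1) * ∑ c, p.2 c * Real.log (g p.1 c) ∂μS) ≤
      sSup {x : ℝ | ∃ f : Z → Fin C → ℝ, Measurable f ∧
        (∀ z c, f z c ∈ Set.Icc (0 : ℝ) 1) ∧
        x = (∫ z, ∑ c, g z c * f z c ∂μZT) -
            ∫ p, w p.1 * ∑ c, p.2 c * f p.1 c ∂μS} := by
  apply le_csSup hbdd
  rcases Nat.lt_or_ge C 2 with hC | hC
  · -- C = 0 or C = 1 : LHS is 0, witness f = 0
    have hLHS : η * ((∫ z, -∑ c, g z c * Real.log (g z c) ∂μZT) -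
          ∫ p, -(w p.1) * ∑ c, p.2 c * Real.log (g p.1 c) ∂μS) = 0 := by
      interval_cases C
      · simp
      · have : α / ((1 : ℝ) - 1) = 0 := by norm_num
        rw [hη]
        push_cast
        rw [this, Real.log_zero]
        simp
    rw [hLHS]
    exact ⟨fun _ _ => 0, measurable_const, fun z c => by simp, by simp⟩
  · -- C ≥ 2
    have hC1 : (1 : ℝ) ≤ (C : ℝ) - 1 := by
      have : (2 : ℝ) ≤ (C : ℝ) := by exact_mod_cast hC
      linarith
    have hpos : 0 < α / ((C : ℝ) - 1) := div_pos hα0 (by linarith)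
    have hlogneg : Real.log (α / ((C : ℝ) - 1)) < 0 :=
      Real.log_neg hpos hsm
    have hηpos : 0 < η := by
      rw [hη, neg_pos]
      exact inv_lt_zero.mpr hlogneg
    have hηlog : η * (-Real.log (α / ((C : ℝ) - 1))) = 1 := by
      rw [hη]
      field_simp
      exact div_self hlogneg.ne
    -- bounds on g
    have hg0 : ∀ z c, 0 < g z c := fun z c => lt_of_lt_of_le hpos (hg z c).1
    have hg1 : ∀ z c, g z c < 1 := fun z c => lt_of_le_of_lt (hg z c).2 (by linarith)
    set f : Z → Fin C → ℝ := fun z c => η * (-Real.log (g z c)) with hf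
    have hfm : Measurable f := by
      apply measurable_pi_lambda
      intro c
      exact ((Real.measurable_log.comp ((measurable_pi_apply c).comp hgm)).neg).const_mul η
    have hfb : ∀ z c, f z c ∈ Set.Icc (0 : ℝ) 1 := by
      intro z c
      constructor
      · apply mul_nonneg hηpos.le
        have := Real.log_neg (hg0 z c) (hg1 z c)
        linarith
      · calc η * (-Real.log (g z c)) ≤ η * (-Real.log (α / ((C : ℝ) - 1))) := by
              apply mul_le_mul_of_nonneg_left _ hηpos.le
              have := Real.log_le_log hpos (hg z c).1
              linarith
          _ = 1 := hηlog
    refine ⟨f, hfm, hfb, ?_⟩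
    have e1 : (∫ z, ∑ c, g z c * f z c ∂μZT)
        = η * ∫ z, -∑ c, g z c * Real.log (g z c) ∂μZT := by
      rw [← integral_const_mul]
      congr 1
      funext z
      rw [← Finset.sum_neg_distrib, Finset.mul_sum]
      exact Finset.sum_congr rfl fun c _ => by simp only [hf]; ring
    have e2 : (∫ p, w p.1 * ∑ c, p.2 c * f p.1 c ∂μS)
        = η * ∫ p, -(w p.1) * ∑ c, p.2 c * Real.log (g p.1 c) ∂μS := by
      rw [← integral_const_mul]
      congr 1
      funext p
      rw [Finset.mul_sum, Finset.mul_sum, Finset.mul_sum]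
      congr 1; funext c; ring
    rw [e1, e2]
    ring
end

section
/- Inductive design of weights and conditional invariance: let ψ : Z → Z' be measurable, p_S, p_T joint densities on Z with p_S > 0, Z' = ψ(Z), and w : Z' → ℝ₊. If w(z')·p_S(z) = p_T(z) holds for (almost) all z (where z' = ψ(z)), then: (i) w(z') = p_T(z')/p_S(z') for the induced marginals on Z', and (ii) the conditional distributions of Z given Z' agree across domains: p_S(z|z') = p_T(z|z'). -/
open MeasureTheory ProbabilityTheory

open scoped ENNReal

lemma compProd_withDensity_fst {α β : Type*} [MeasurableSpace α] [MeasurableSpace β]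
    (ν : Measure α) [SFinite ν] (κ : ProbabilityTheory.Kernel α β) [IsSFiniteKernel κ]
    {f : α → ℝ≥0∞} (hf : Measurable f) :
    (ν ⊗ₘ κ).withDensity (fun p => f p.1) = (ν.withDensity f) ⊗ₘ κ := by
  ext s hs
  rw [withDensity_apply _ hs, Measure.compProd_apply hs,
    lintegral_withDensity_eq_lintegral_mul _ hf (Kernel.measurable_kernel_prodMk_left hs)]
  rw [← lintegral_indicator hs,
    Measure.lintegral_compProd (f := fun p : α × β => s.indicator (fun q => f q.1) p)
      ((hf.comp measurable_fst).indicator hs)]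
  refine lintegral_congr fun a => ?_
  have : ∀ b, s.indicator (fun p => f p.1) (a, b)
      = (Prod.mk a ⁻¹' s).indicator (fun _ => f a) b := by
    intro b
    by_cases hb : (a, b) ∈ s <;> simp [Set.indicator, hb, Set.mem_preimage]
  simp_rw [this]
  rw [lintegral_indicator (measurable_prodMk_left hs), setLIntegral_const]
  rfl

/-- Inductive design of weights: if the target distribution of representations
is the source distribution reweighted by `w ∘ ψ`, then `w` is the density ratio
of the induced marginals on `Z'` and the conditional distributions of `Z`
given `Z' = ψ(Z)` agree across domains (where the weight is positive). -/
theorem stmt16 {Z Z' : Type*} [MeasurableSpace Z] [MeasurableSpace Z']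
    [StandardBorelSpace Z] [Nonempty Z]
    (ψ : Z → Z') (hψ : Measurable ψ)
    (μS μT : Measure Z) [IsProbabilityMeasure μS] [IsProbabilityMeasure μT]
    (w : Z' → ℝ) (hwm : Measurable w) (hwnn : ∀ z', 0 ≤ w z')
    (hrel : μT = μS.withDensity (fun z => ENNReal.ofReal (w (ψ z)))) :
    μT.map ψ = (μS.map ψ).withDensity (fun z' => ENNReal.ofReal (w z')) ∧
    ∀ᵐ z' ∂(μS.map ψ), w z' ≠ 0 →
      condDistrib id ψ μS z' = condDistrib id ψ μT z' := by
  set f : Z' → ℝ≥0∞ := fun z' => ENNReal.ofReal (w z') with hfdef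
  have hf : Measurable f := hwm.ennreal_ofReal
  have hφ : Measurable fun z => (ψ z, z) := hψ.prodMk measurable_id
  -- part (i)
  have hmap : μT.map ψ = (μS.map ψ).withDensity f := by
    ext s hs
    rw [Measure.map_apply hψ hs, hrel, withDensity_apply _ (hψ hs),
      withDensity_apply _ hs, setLIntegral_map hs hf hψ]
  -- joint law of (ψ z, z) under μT as a density over that of μS
  have hρ : μT.map (fun z => (ψ z, z))
      = (μS.map (fun z => (ψ z, z))).withDensity (fun p => f p.1) := by
    ext s hs
    rw [Measure.map_apply hφ hs, hrel, withDensity_apply _ (hφ hs),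
      withDensity_apply _ hs,
      setLIntegral_map (f := fun p : Z' × Z => f p.1) hs (hf.comp measurable_fst) hφ]
  set κ := condDistrib id ψ μS with hκdef
  have hκeq : κ = (μS.map (fun z => (ψ z, z))).condKernel := by
    rw [hκdef, condDistrib]
    rfl
  have hfst : (μS.map (fun z => (ψ z, z))).fst = μS.map ψ := by
    ext s hs
    rw [Measure.fst_apply hs, Measure.map_apply hφ (measurable_fst hs),
      Measure.map_apply hψ hs]
    rfl
  have hdis : μS.map (fun z => (ψ z, z)) = (μS.map ψ) ⊗ₘ κ := by
    rw [hκeq, ← hfst, Measure.disintegrate]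
  have hcomp : μT.map (fun z => (ψ z, z)) = (μT.map ψ) ⊗ₘ κ := by
    rw [hρ, hdis, compProd_withDensity_fst _ _ hf, hmap]
  have hae : ∀ᵐ x ∂μT.map ψ, κ x = condDistrib id ψ μT x :=
    (condDistrib_ae_eq_of_measure_eq_compProd ψ measurable_id.aemeasurable hcomp).mono fun x h => h.symm
  refine ⟨hmap, ?_⟩
  rw [hmap] at hae
  rw [ae_withDensity_iff hf] at hae
  filter_upwards [hae] with z' h hz'
  exact h (by simp [hfdef, ENNReal.ofReal_eq_zero, not_le,
    lt_of_le_of_ne (hwnn z') (Ne.symm hz')])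
end
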